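/- With x_j = cos²((n+1-j)π/(2n+2)) for j = 1,...,n, the switch function Σₙ(x) (equal to (-1)^m on [x_m, x_{m+1}), with x₀ = 0, x_{n+1} = 1) satisfies ∫₀¹ Σₙ(x)(t) p(t) dt = 0 for every real polynomial p of degree at most n-1. -/

import Mathlib

open MeasureTheory Real

/-- The switch function with switch points `x₁ ≤ ... ≤ xₙ`, starting at `+1`:
it equals `(-1)^m` on `[x_m, x_{m+1})`. -/
noncomputable def switchFun {n : ℕ} (x : Fin n → ℝ) (t : ℝ) : ℝ :=
  (-1 : ℝ) ^ (Finset.univ.filter (fun j => x j ≤ t)).card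

lemma geom_zero (N : ℕ) (hN : 0 < N) (d : ℕ) (hd : 0 < d) (hd2 : d < 2*N) :
    ∑ m ∈ Finset.range (2*N), Complex.exp (π * Complex.I * d / N) ^ m = 0 := by
  set ζ := Complex.exp (π * Complex.I * d / N) with hζ
  have hNne : (N:ℂ) ≠ 0 := Nat.cast_ne_zero.mpr hN.ne'
  have hζ2N : ζ ^ (2*N) = 1 := by
    rw [hζ, ← Complex.exp_nat_mul]
    have : ((2*N : ℕ) : ℂ) * (π * Complex.I * d / N) = (d:ℤ) * (2 * π * Complex.I) := by
      push_cast; field_simp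
    rw [this, Complex.exp_int_mul_two_pi_mul_I]
  have hζ1 : ζ ≠ 1 := by
    rw [hζ, Ne, Complex.exp_eq_one_iff]
    rintro ⟨k, hk⟩
    have hπI : (π:ℂ) * Complex.I ≠ 0 := by
      simp [Complex.ext_iff, Real.pi_ne_zero]
    have : (d : ℂ) = ((k * (2*N) : ℤ) : ℂ) := by
      field_simp at hk
      have h2 : (π:ℂ) * Complex.I * (d:ℂ) = (π:ℂ) * Complex.I * ((k * (2*N) : ℤ) : ℂ) := by
        push_cast; linear_combination ((π:ℂ) * Complex.I) * hk
      exact mul_left_cancel₀ hπI h2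
    have hdk : (d:ℤ) = k * (2*N) := by exact_mod_cast this
    rcases le_or_gt k 0 with h | h
    · have : (d:ℤ) ≤ 0 := by
        rw [hdk]; exact mul_nonpos_of_nonpos_of_nonneg h (by positivity)
      omega
    · have : (2*N:ℤ) ≤ d := by
        rw [hdk]; nlinarith [h, (by positivity : (0:ℤ) < 2*N)]
      omega
  have := geom_sum_eq hζ1 (2*N)
  rw [this, hζ2N, sub_self, zero_div]

lemma key_sum (N K : ℕ) (hK : 1 ≤ K) (hKN : K < N) :
    ∑ m ∈ Finset.range (2*N), (-1:ℝ)^m * Real.cos (m * π / (2*N)) ^ (2*K) = 0 := by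
  have hN : 0 < N := hK.trans hKN.le
  have hNne : (N:ℂ) ≠ 0 := Nat.cast_ne_zero.mpr hN.ne'
  have hcast : ((∑ m ∈ Finset.range (2*N), (-1:ℝ)^m * Real.cos (m * π / (2*N)) ^ (2*K) : ℝ) : ℂ)
      = ∑ m ∈ Finset.range (2*N), (-1:ℂ)^m * Complex.cos ((m:ℂ) * π / (2*N)) ^ (2*K) := by
    push_cast [Complex.ofReal_cos]
    norm_num
  have main : ∑ m ∈ Finset.range (2*N), (-1:ℂ)^m * Complex.cos ((m:ℂ) * π / (2*N)) ^ (2*K) = 0 := by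
    have term : ∀ m ∈ Finset.range (2*N), (-1:ℂ)^m * Complex.cos ((m:ℂ) * π / (2*N)) ^ (2*K)
        = ∑ r ∈ Finset.range (2*K+1),
            ((Nat.choose (2*K) r : ℂ) / 4^K) * Complex.exp (π * Complex.I * (N + r - K) / N) ^ m := by
      intro m _
      set z : ℂ := (m:ℂ) * π / (2*N) with hz
      rw [Complex.cos, div_pow, add_pow]
      rw [Finset.sum_div, Finset.mul_sum]
      refine Finset.sum_congr rfl ?_
      intro r hr
      have hr2K : r ≤ 2*K := Nat.lt_succ_iff.mp (Finset.mem_range.mp hr)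
      rw [← Complex.exp_nat_mul, ← Complex.exp_nat_mul, ← Complex.exp_nat_mul]
      have hm1 : (-1:ℂ)^m = Complex.exp ((m:ℂ) * (π * Complex.I)) := by
        rw [Complex.exp_nat_mul, Complex.exp_pi_mul_I]
      rw [hm1]
      have harg : (m:ℂ) * (π * Complex.I) + ((r:ℂ) * (z * Complex.I) + ((2*K - r : ℕ):ℂ) * (-z * Complex.I))
          = (m:ℂ) * (π * Complex.I * ((N:ℂ) + r - K) / N) := by
        rw [hz]
        push_cast [Nat.cast_sub hr2K]
        field_simp
        ring
      have h2 : ((2:ℂ)^(2*K)) = 4^K := by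
        rw [pow_mul]; norm_num
      rw [← harg, Complex.exp_add, Complex.exp_add, h2]
      ring
    rw [Finset.sum_congr rfl term, Finset.sum_comm]
    refine Finset.sum_eq_zero ?_
    intro r hr
    have hr2K : r ≤ 2*K := Nat.lt_succ_iff.mp (Finset.mem_range.mp hr)
    rw [← Finset.mul_sum]
    have hd : (((N + r - K : ℕ)):ℂ) = (N:ℂ) + r - K := by
      push_cast [Nat.cast_sub (by omega : K ≤ N + r)]
      ring
    rw [show ((N:ℂ) + r - K) = (((N + r - K : ℕ)):ℂ) from hd.symm]
    rw [geom_zero N hN (N + r - K) (by omega) (by omega), mul_zero]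
  rw [main] at hcast
  exact_mod_cast hcast

lemma half_sum (n K : ℕ) (hK : 1 ≤ K) (hKn : K ≤ n) :
    ∑ m ∈ Finset.Ico 1 (n+1), (-1:ℝ)^m * Real.cos (m * π / (2*(n+1))) ^ (2*K) = -(1/2) := by
  set N := n + 1 with hN
  set f : ℕ → ℝ := fun m => (-1:ℝ)^m * Real.cos (m * π / (2*N)) ^ (2*K) with hf
  have hkey : ∑ m ∈ Finset.range (2*N), f m = 0 := key_sum N K hK (by omega)
  have hsplit : Finset.range (2*N) =
      (Finset.Ico 0 1 ∪ Finset.Ico 1 N) ∪ (Finset.Ico N (N+1) ∪ Finset.Ico (N+1) (2*N)) := by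
    rw [Finset.Ico_union_Ico_eq_Ico (by omega) (by omega),
        Finset.Ico_union_Ico_eq_Ico (by omega) (by omega),
        Finset.Ico_union_Ico_eq_Ico (by omega) (by omega)]
    rw [Finset.range_eq_Ico]
  have hd1 : Disjoint (Finset.Ico 0 1) (Finset.Ico 1 N) := Finset.Ico_disjoint_Ico_consecutive _ _ _
  have hd2 : Disjoint (Finset.Ico N (N+1)) (Finset.Ico (N+1) (2*N)) :=
    Finset.Ico_disjoint_Ico_consecutive _ _ _
  have hd3 : Disjoint (Finset.Ico 0 1 ∪ Finset.Ico 1 N) (Finset.Ico N (N+1) ∪ Finset.Ico (N+1) (2*N)) := by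
    rw [Finset.Ico_union_Ico_eq_Ico (by omega) (by omega),
        Finset.Ico_union_Ico_eq_Ico (by omega) (by omega)]
    exact Finset.Ico_disjoint_Ico_consecutive _ _ _
  rw [hsplit, Finset.sum_union hd3, Finset.sum_union hd1, Finset.sum_union hd2] at hkey
  have h0 : ∑ m ∈ Finset.Ico 0 1, f m = 1 := by
    norm_num [hf]
  have hNterm : ∑ m ∈ Finset.Ico N (N+1), f m = 0 := by
    have : ((N:ℝ)) * π / (2*N) = π / 2 := by
      have : (N:ℝ) ≠ 0 := by positivity
      field_simp
    have h2K : 2*K ≠ 0 := by omega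
    simp [hf, this, Real.cos_pi_div_two, zero_pow h2K]
  have hrefl : ∑ m ∈ Finset.Ico (N+1) (2*N), f m = ∑ m ∈ Finset.Ico 1 N, f m := by
    refine Finset.sum_bij' (fun m _ => 2*N - m) (fun m _ => 2*N - m) ?_ ?_ ?_ ?_ ?_
    · intro a ha; simp only [Finset.mem_Ico] at ha ⊢; omega
    · intro a ha; simp only [Finset.mem_Ico] at ha ⊢; omega
    · intro a ha; simp only [Finset.mem_Ico] at ha; show 2*N - (2*N - a) = a; omega
    · intro a ha; simp only [Finset.mem_Ico] at ha; show 2*N - (2*N - a) = a; omega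
    · intro a ha
      simp only [Finset.mem_Ico] at ha
      have hsign : (-1:ℝ)^a = (-1:ℝ)^(2*N - a) := by
        conv_lhs => rw [show a = (2*N - a) + 2*(a - N) from by omega]
        rw [pow_add, pow_mul]
        norm_num
      have hang : (a:ℝ) * π / (2*N) = π - ((2*N - a : ℕ):ℝ) * π / (2*N) := by
        have hNne : (N:ℝ) ≠ 0 := by positivity
        push_cast [Nat.cast_sub (by omega : a ≤ 2*N)]
        field_simp
        ring
      show f a = f (2*N - a)
      simp only [hf]
      rw [hsign, hang, Real.cos_pi_sub, Even.neg_pow (even_two_mul K)]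
  rw [h0, hNterm, hrefl] at hkey
  simp only [hf, hN] at hkey
  push_cast at hkey ⊢
  linarith

lemma alt_sum (n K : ℕ) (hK : 1 ≤ K) (hKn : K ≤ n) :
    ∑ j : Fin n, (-1:ℝ)^(j:ℕ) * (Real.cos (((n:ℝ) - j) * π / (2*n+2)) ^ 2) ^ K
      = (-1:ℝ)^(n+1) / 2 := by
  set f : ℕ → ℝ := fun m => (-1:ℝ)^m * Real.cos (m * π / (2*(n+1))) ^ (2*K) with hf
  have hhalf := half_sum n K hK hKn
  have hrw : ∀ j : Fin n, (-1:ℝ)^(j:ℕ) * (Real.cos (((n:ℝ) - j) * π / (2*n+2)) ^ 2) ^ K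
      = (-1:ℝ)^n * f (n - j) := by
    intro j
    have hj : (j:ℕ) < n := j.isLt
    have hang : ((n:ℝ) - (j:ℕ)) * π / (2*n+2) = ((n - (j:ℕ) : ℕ):ℝ) * π / (2*((n:ℕ)+1)) := by
      push_cast [Nat.cast_sub hj.le]
      ring_nf
    have hsign : (-1:ℝ)^n * (-1:ℝ)^(n - (j:ℕ)) = (-1:ℝ)^(j:ℕ) := by
      rw [← pow_add, show n + (n - (j:ℕ)) = (j:ℕ) + 2*(n - j) from by omega, pow_add, pow_mul]
      norm_num
    simp only [hf]
    rw [hang, ← pow_mul, ← mul_assoc, hsign]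
  rw [Finset.sum_congr rfl (fun j _ => hrw j), ← Finset.mul_sum]
  have hreindex : ∑ j : Fin n, f (n - (j:ℕ)) = ∑ m ∈ Finset.Ico 1 (n+1), f m := by
    rw [Fin.sum_univ_eq_sum_range (fun j => f (n - j))]
    refine Finset.sum_bij' (fun m _ => n - m) (fun m _ => n - m) ?_ ?_ ?_ ?_ ?_
    · intro a ha; simp only [Finset.mem_range] at ha; simp only [Finset.mem_Ico]; omega
    · intro a ha; simp only [Finset.mem_Ico] at ha; simp only [Finset.mem_range]; omega
    · intro a ha; simp only [Finset.mem_range] at ha; show n - (n - a) = a; omega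
    · intro a ha; simp only [Finset.mem_Ico] at ha; show n - (n - a) = a; omega
    · intro a ha; rfl
  rw [hreindex, hhalf]
  rw [pow_succ]
  ring

lemma alt_tel (c : ℕ) : ∑ m ∈ Finset.range c, 2*(-1:ℝ)^(m+1) = (-1)^c - 1 := by
  induction c with
  | zero => simp
  | succ c ih => rw [Finset.sum_range_succ, ih, pow_succ]; ring

lemma bracket (n k : ℕ) (hk : k < n) :
    1 + ∑ j : Fin n, 2*(-1:ℝ)^((j:ℕ)+1) * (1 - (Real.cos (((n:ℝ) - j) * π / (2*n+2)) ^ 2)^(k+1)) = 0 := by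
  have h1 := alt_sum n (k+1) (by omega) (by omega)
  have h2 : ∑ j : Fin n, 2*(-1:ℝ)^((j:ℕ)+1) = (-1)^n - 1 := by
    rw [Fin.sum_univ_eq_sum_range (fun m => 2*(-1:ℝ)^(m+1))]
    exact alt_tel n
  have e1 : ∀ j : Fin n, 2*(-1:ℝ)^((j:ℕ)+1) * (1 - (Real.cos (((n:ℝ) - j) * π / (2*n+2)) ^ 2)^(k+1))
      = 2*(-1:ℝ)^((j:ℕ)+1) - (-2)*((-1:ℝ)^(j:ℕ) * (Real.cos (((n:ℝ) - j) * π / (2*n+2)) ^ 2)^(k+1)) := by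
    intro j; rw [pow_succ]; ring
  rw [Finset.sum_congr rfl (fun j _ => e1 j), Finset.sum_sub_distrib]
  have h3 : ∑ j : Fin n, (-2:ℝ) * ((-1:ℝ)^(j:ℕ) * (Real.cos (((n:ℝ) - j) * π / (2*n+2)) ^ 2)^(k+1))
      = -2 * ((-1:ℝ)^(n+1)/2) := by
    rw [← Finset.mul_sum, h1]
  rw [h3, h2, pow_succ]
  ring

lemma switch_repr {n : ℕ} (x : Fin n → ℝ) (hx : Monotone x) (t : ℝ) :
    switchFun x t = 1 + ∑ j : Fin n, (if x j ≤ t then 2*(-1:ℝ)^((j:ℕ)+1) else 0) := by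
  classical
  set S := Finset.univ.filter (fun j => x j ≤ t) with hS
  set c := S.card with hc
  have hcn : c ≤ n := by
    calc c ≤ Finset.univ.card := Finset.card_le_univ S
    _ = n := by simp
  have hmem : ∀ j : Fin n, x j ≤ t ↔ (j:ℕ) < c := by
    intro j
    constructor
    · intro hj
      have hsub : Finset.Iic j ⊆ S := by
        intro i hi
        simp only [Finset.mem_Iic] at hi
        simp only [hS, Finset.mem_filter, Finset.mem_univ, true_and]
        exact le_trans (hx hi) hj
      have := Finset.card_le_card hsub
      rw [Fin.card_Iic] at this
      omega
    · intro hj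
      by_contra hjS
      have hsub : S ⊆ Finset.Iio j := by
        intro i hi
        simp only [Finset.mem_Iio]
        by_contra hij
        push_neg at hij
        apply hjS
        simp only [hS, Finset.mem_filter, Finset.mem_univ, true_and] at hi
        exact le_trans (hx hij) hi
      have := Finset.card_le_card hsub
      rw [Fin.card_Iio] at this
      omega
  have hcard : switchFun x t = (-1:ℝ)^c := rfl
  rw [hcard]
  have hsum : ∑ j : Fin n, (if x j ≤ t then 2*(-1:ℝ)^((j:ℕ)+1) else 0)
      = ∑ m ∈ Finset.range c, 2*(-1:ℝ)^(m+1) := by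
    have h1 : ∀ j : Fin n, (if x j ≤ t then 2*(-1:ℝ)^((j:ℕ)+1) else 0)
        = (if (j:ℕ) < c then 2*(-1:ℝ)^((j:ℕ)+1) else 0) := by
      intro j
      by_cases h : x j ≤ t
      · rw [if_pos h, if_pos ((hmem j).mp h)]
      · rw [if_neg h, if_neg (fun hc' => h ((hmem j).mpr hc'))]
    rw [Finset.sum_congr rfl (fun j _ => h1 j)]
    rw [Fin.sum_univ_eq_sum_range (fun m => if m < c then 2*(-1:ℝ)^(m+1) else 0)]
    rw [← Finset.sum_filter]
    apply Finset.sum_congr _ (fun _ _ => rfl)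
    ext m
    simp only [Finset.mem_filter, Finset.mem_range]
    omega
  rw [hsum, alt_tel c]
  ring

lemma indint (a c d : ℝ) (g : ℝ → ℝ) (hg : Continuous g) :
    IntervalIntegrable (fun t => if a ≤ t then g t else 0) MeasureTheory.volume c d := by
  have heq : (fun t => if a ≤ t then g t else 0) = Set.indicator (Set.Ici a) g := by
    ext t; simp [Set.indicator_apply, Set.mem_Ici]
  rw [heq]
  exact ⟨((hg.intervalIntegrable c d).1).indicator measurableSet_Ici,
    ((hg.intervalIntegrable c d).2).indicator measurableSet_Ici⟩

lemma cut (a : ℝ) (ha0 : 0 ≤ a) (ha1 : a ≤ 1) (g : ℝ → ℝ) (hg : Continuous g) :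
    ∫ t in (0:ℝ)..1, (if a ≤ t then g t else 0) = ∫ t in a..1, g t := by
  have h1 := indint a 0 a g hg
  have h2 := indint a a 1 g hg
  rw [← intervalIntegral.integral_add_adjacent_intervals h1 h2]
  have hae : ∀ᵐ t : ℝ, t ∉ ({a} : Set ℝ) :=
    MeasureTheory.measure_eq_zero_iff_ae_notMem.mp Real.volume_singleton
  have hz : (∫ t in (0:ℝ)..a, (if a ≤ t then g t else 0)) = ∫ t in (0:ℝ)..a, (0:ℝ) := by
    apply intervalIntegral.integral_congr_ae
    filter_upwards [hae] with t ht hmem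
    rw [Set.uIoc_of_le ha0] at hmem
    have hta : ¬ a ≤ t := by
      intro h
      exact ht (le_antisymm hmem.2 h)
    simp [hta]
  have he : (∫ t in a..(1:ℝ), (if a ≤ t then g t else 0)) = ∫ t in a..1, g t := by
    apply intervalIntegral.integral_congr
    intro t ht
    rw [Set.uIcc_of_le ha1] at ht
    simp [ht.1]
  rw [hz, he, intervalIntegral.integral_zero, zero_add]

theorem stmt_9 (n : ℕ) (p : Polynomial ℝ) (hp : p.degree < n) :
    ∫ t in (0:ℝ)..1,
      switchFun (fun j : Fin n => Real.cos (((n:ℝ) - j) * π / (2*n + 2)) ^ 2) t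
        * p.eval t = 0 := by
  by_cases hp0 : p = 0
  · simp [hp0]
  have hn0 : 0 < n := by
    by_contra h
    push_neg at h
    have hn : n = 0 := by omega
    subst hn
    have : p.degree < 0 := by exact_mod_cast hp
    exact hp0 (Polynomial.degree_eq_bot.mp (Nat.WithBot.lt_zero_iff.mp this))
  have hdeg : p.natDegree < n := (Polynomial.natDegree_lt_iff_degree_lt hp0).mpr hp
  set x : Fin n → ℝ := fun j => Real.cos (((n:ℝ) - j) * π / (2*n + 2)) ^ 2 with hxdef
  have hang : ∀ j : Fin n, 0 ≤ ((n:ℝ) - j) * π / (2*n+2) ∧ ((n:ℝ) - j) * π / (2*n+2) ≤ π/2 := by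
    intro j
    have hj : ((j:ℕ):ℝ) + 1 ≤ (n:ℝ) := by exact_mod_cast j.isLt
    have hjn : (0:ℝ) ≤ (j:ℕ) := Nat.cast_nonneg _
    constructor
    · apply div_nonneg (mul_nonneg (by linarith) Real.pi_pos.le) (by positivity)
    · rw [div_le_div_iff₀ (by positivity) two_pos]
      nlinarith [Real.pi_pos]
  have hcosnn : ∀ j : Fin n, 0 ≤ Real.cos (((n:ℝ) - j) * π / (2*n+2)) := fun j =>
    Real.cos_nonneg_of_mem_Icc ⟨by linarith [(hang j).1, Real.pi_pos], (hang j).2⟩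
  have hmono : Monotone x := by
    intro i j hij
    simp only [hxdef]
    have hij' : ((i:ℕ):ℝ) ≤ ((j:ℕ):ℝ) := by exact_mod_cast hij
    have hle : ((n:ℝ) - j) * π / (2*n+2) ≤ ((n:ℝ) - i) * π / (2*n+2) := by
      apply div_le_div_of_nonneg_right ?_ ?_ |>.trans_eq rfl
      · exact mul_le_mul_of_nonneg_right (by linarith) Real.pi_pos.le
      · positivity
    have hcos := Real.cos_le_cos_of_nonneg_of_le_pi (hang j).1
      (le_trans (hang i).2 (by linarith [Real.pi_pos])) hle
    exact pow_le_pow_left₀ (hcosnn i) hcos 2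
  have hx0 : ∀ j, (0:ℝ) ≤ x j := fun j => sq_nonneg _
  have hx1 : ∀ j, x j ≤ 1 := by
    intro j
    simp only [hxdef]
    nlinarith [Real.neg_one_le_cos (((n:ℝ) - j) * π / (2*n+2)),
      Real.cos_le_one (((n:ℝ) - j) * π / (2*n+2))]
  have hpc : Continuous (fun t : ℝ => p.eval t) := p.continuous
  have hrepr : Set.EqOn (fun t => switchFun x t * p.eval t)
      (fun t => p.eval t + ∑ j : Fin n, (if x j ≤ t then (2*(-1:ℝ)^((j:ℕ)+1)) * p.eval t else 0))
      (Set.uIcc 0 1) := by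
    intro t _
    simp only
    rw [switch_repr x hmono t, add_mul, one_mul, Finset.sum_mul]
    congr 1
    refine Finset.sum_congr rfl (fun j _ => ?_)
    rw [ite_mul, zero_mul]
  rw [intervalIntegral.integral_congr hrepr]
  have hIint : ∀ j : Fin n, IntervalIntegrable
      (fun t => if x j ≤ t then (2*(-1:ℝ)^((j:ℕ)+1)) * p.eval t else 0) volume 0 1 :=
    fun j => indint _ 0 1 _ (continuous_const.mul hpc)
  have hsumint : IntervalIntegrable
      (fun t => ∑ j : Fin n, (if x j ≤ t then (2*(-1:ℝ)^((j:ℕ)+1)) * p.eval t else 0)) volume 0 1 := by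
    have h := IntervalIntegrable.sum Finset.univ
      (f := fun j : Fin n => fun t => if x j ≤ t then (2*(-1:ℝ)^((j:ℕ)+1)) * p.eval t else 0)
      (fun j _ => hIint j)
    convert h using 1
    · rfl
    ext t
    simp [Finset.sum_apply]
  rw [intervalIntegral.integral_add (hpc.intervalIntegrable 0 1) hsumint]
  rw [intervalIntegral.integral_finset_sum (fun j _ => hIint j)]
  have hcut : ∀ j : Fin n, (∫ t in (0:ℝ)..1, (if x j ≤ t then (2*(-1:ℝ)^((j:ℕ)+1)) * p.eval t else 0))
      = (2*(-1:ℝ)^((j:ℕ)+1)) * ∫ t in (x j)..1, p.eval t := by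
    intro j
    rw [cut (x j) (hx0 j) (hx1 j) (fun t => (2*(-1:ℝ)^((j:ℕ)+1)) * p.eval t) (continuous_const.mul hpc),
      intervalIntegral.integral_const_mul]
  rw [Finset.sum_congr rfl (fun j _ => hcut j)]
  have hIval : ∀ a : ℝ, (∫ t in a..1, p.eval t)
      = ∑ k ∈ Finset.range n, p.coeff k * ((1 - a^(k+1))/((k:ℝ)+1)) := by
    intro a
    have heq : Set.EqOn (fun t : ℝ => p.eval t)
        (fun t : ℝ => ∑ k ∈ Finset.range n, p.coeff k * t^k) (Set.uIcc a 1) :=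
      fun t _ => Polynomial.eval_eq_sum_range' hdeg t
    rw [intervalIntegral.integral_congr heq,
        intervalIntegral.integral_finset_sum
          (fun k _ => Continuous.intervalIntegrable (by continuity) a 1)]
    refine Finset.sum_congr rfl (fun k _ => ?_)
    rw [intervalIntegral.integral_const_mul, integral_pow, one_pow]
  rw [hIval, Finset.sum_congr rfl (fun j (_ : j ∈ Finset.univ) => by rw [hIval (x j)])]
  rw [Finset.sum_congr rfl (fun j (_ : j ∈ Finset.univ) => Finset.mul_sum _ _ _)]
  rw [Finset.sum_comm, ← Finset.sum_add_distrib]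
  refine Finset.sum_eq_zero (fun k hk => ?_)
  have hkn : k < n := Finset.mem_range.mp hk
  have hterm : ∀ j : Fin n, (2*(-1:ℝ)^((j:ℕ)+1)) * (p.coeff k * ((1 - (x j)^(k+1))/((k:ℝ)+1)))
      = (p.coeff k/((k:ℝ)+1)) * (2*(-1:ℝ)^((j:ℕ)+1) * (1 - (x j)^(k+1))) := by
    intro j; ring
  rw [Finset.sum_congr rfl (fun j _ => hterm j), ← Finset.mul_sum]
  have h0p : (0:ℝ)^(k+1) = 0 := zero_pow (Nat.succ_ne_zero k)
  rw [h0p]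
  have hb := bracket n k hkn
  simp only [hxdef]
  linear_combination (p.coeff k / ((k:ℝ)+1)) * hb
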